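/- (Polynomial structure on diagonals) Let R = R_{[a₁,a₂],[b₁,b₂]} be a diamond rectangle and let U be discrete harmonic on R with U(s,b₁) = 0 and U(s,b₁+1/2) = 0 for all s with (s,b₁) ∈ R, respectively (s,b₁+1/2) ∈ R. Then for every half-integer k with b₁+1 ≤ k ≤ b₂ there is a real polynomial p_k of degree at most 2(k−b₁)−2 such that U(s,k) = (−1)^{s+k} p_k(s) for every s with (s,k) ∈ R (note s+k ∈ ℤ, so (−1)^{s+k} is well defined). -/

import Mathlib

/-- `x` is a half-integer. -/
def HalfInt (x : ℚ) : Prop := ∃ n : ℤ, x = (n : ℚ) / 2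

/-- The rotated lattice `ℤ²_⋄ = {(s,k) ∈ (½ℤ)² : s + k ∈ ℤ}`. -/
def Zdiamond : Set (ℚ × ℚ) :=
  {p | HalfInt p.1 ∧ HalfInt p.2 ∧ ∃ n : ℤ, p.1 + p.2 = (n : ℚ)}

/-- The diamond rectangle `R_{[a₁,a₂],[b₁,b₂]}`. -/
def dRect (a₁ a₂ b₁ b₂ : ℚ) : Set (ℚ × ℚ) :=
  {p | p ∈ Zdiamond ∧ a₁ ≤ p.1 ∧ p.1 ≤ a₂ ∧ b₁ ≤ p.2 ∧ p.2 ≤ b₂}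

/-- `U` is discrete harmonic on the subset `S` of `ℤ²_⋄`:
`4U(s+1/2,k+1/2) = U(s,k) + U(s+1,k) + U(s,k+1) + U(s+1,k+1)` whenever all five
points lie in `S`. -/
def DHarmOn (U : ℚ × ℚ → ℝ) (S : Set (ℚ × ℚ)) : Prop :=
  ∀ s k : ℚ, (s, k) ∈ S → (s + 1, k) ∈ S → (s, k + 1) ∈ S → (s + 1, k + 1) ∈ S →
    (s + 1/2, k + 1/2) ∈ S →
    4 * U (s + 1/2, k + 1/2) = U (s, k) + U (s + 1, k) + U (s, k + 1) + U (s + 1, k + 1)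

/- ### Auxiliary lemmas -/

lemma HalfInt.add {x y : ℚ} (hx : HalfInt x) (hy : HalfInt y) : HalfInt (x + y) := by
  obtain ⟨m, hm⟩ := hx; obtain ⟨n, hn⟩ := hy
  exact ⟨m + n, by rw [hm, hn]; push_cast; ring⟩

lemma HalfInt.sub {x y : ℚ} (hx : HalfInt x) (hy : HalfInt y) : HalfInt (x - y) := by
  obtain ⟨m, hm⟩ := hx; obtain ⟨n, hn⟩ := hy
  exact ⟨m - n, by rw [hm, hn]; push_cast; ring⟩

lemma halfInt_one : HalfInt 1 := ⟨2, by norm_num⟩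

lemma halfInt_half : HalfInt (1/2) := ⟨1, by norm_num⟩

lemma halfInt_nat (n : ℕ) : HalfInt (n : ℚ) := ⟨2 * n, by push_cast; ring⟩

lemma mem_dRect {a₁ a₂ b₁ b₂ s k : ℚ} (hs : HalfInt s) (hk : HalfInt k)
    (hn : ∃ n : ℤ, s + k = (n : ℚ)) (h1 : a₁ ≤ s) (h2 : s ≤ a₂) (h3 : b₁ ≤ k) (h4 : k ≤ b₂) :
    (s, k) ∈ dRect a₁ a₂ b₁ b₂ := ⟨⟨hs, hk, hn⟩, h1, h2, h3, h4⟩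

/-- Discrete antiderivative of a polynomial. -/
lemma fwd_anti : ∀ (n : ℕ) (q : Polynomial ℝ), q.natDegree ≤ n →
    ∃ P : Polynomial ℝ, (∀ x : ℝ, P.eval (x+1) - P.eval x = q.eval x) ∧
      P.natDegree ≤ n + 1 ∧ (q = 0 → P = 0) := by
  intro n
  induction n with
  | zero =>
    intro q hq
    refine ⟨Polynomial.C (q.coeff 0) * Polynomial.X, ?_, ?_, ?_⟩
    · intro x
      rw [Polynomial.eq_C_of_natDegree_le_zero hq]
      simp; ring
    · exact le_trans Polynomial.natDegree_mul_le (by simp)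
    · intro h; simp [h]
  | succ n IH =>
    intro q hq
    by_cases h : q.natDegree ≤ n
    · obtain ⟨P, h1, h2, h3⟩ := IH q h
      exact ⟨P, h1, le_trans h2 (by omega), h3⟩
    · have hdeg : q.natDegree = n + 1 := le_antisymm hq (by omega)
      have hqne : q ≠ 0 := by intro h0; rw [h0] at hdeg; simp at hdeg
      set c : ℝ := q.coeff (n+1) with hc
      have hn2 : ((n:ℝ) + 2) ≠ 0 := by positivity
      set r : Polynomial ℝ :=
        Polynomial.C (c / ((n:ℝ)+2)) * ((Polynomial.X + 1)^(n+2) - Polynomial.X^(n+2)) with hr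
      have hrc : ∀ m : ℕ, r.coeff m
          = c / ((n:ℝ)+2) * ((((n+2).choose m : ℕ) : ℝ) - if m = n + 2 then 1 else 0) := by
        intro m
        rw [hr, Polynomial.coeff_C_mul, Polynomial.coeff_sub, Polynomial.coeff_X_add_one_pow,
          Polynomial.coeff_X_pow]
      have hq' : (q - r).natDegree ≤ n := by
        apply Polynomial.natDegree_le_iff_coeff_eq_zero.mpr
        intro m hm
        rw [Polynomial.coeff_sub, hrc m]
        rcases eq_or_lt_of_le (Nat.succ_le_of_lt hm) with hm1 | hm2
        · rw [← hm1]
          have h1 : (n+2).choose (n+1) = n + 2 := Nat.choose_succ_self_right (n+1)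
          have h2 : ¬ (n + 1 = n + 2) := by omega
          rw [h1, if_neg h2, ← hc]
          push_cast
          field_simp
          ring
        · have hz : q.coeff m = 0 := Polynomial.coeff_eq_zero_of_natDegree_lt (by omega)
          rcases eq_or_lt_of_le (Nat.succ_le_of_lt hm2) with hm3 | hm4
          · have hz2 : ((((n+2).choose m : ℕ)):ℝ) - (if m = n + 2 then 1 else 0) = 0 := by
              rw [← hm3]; simp
            rw [hz, hz2, mul_zero, zero_sub, neg_eq_zero]
          · rw [hz, Nat.choose_eq_zero_of_lt (by omega), if_neg (by omega)]
            simp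
      obtain ⟨P', hP'1, hP'2, _⟩ := IH (q - r) hq'
      refine ⟨Polynomial.C (c / ((n:ℝ)+2)) * Polynomial.X^(n+2) + P', ?_, ?_, ?_⟩
      · intro x
        have h1 := hP'1 x
        simp only [Polynomial.eval_sub, hr, Polynomial.eval_mul, Polynomial.eval_C,
          Polynomial.eval_pow, Polynomial.eval_add, Polynomial.eval_X, Polynomial.eval_one] at h1 ⊢
        ring_nf at h1 ⊢
        linarith
      · refine le_trans (Polynomial.natDegree_add_le _ _) (max_le ?_ (by omega))
        exact le_trans Polynomial.natDegree_mul_le (by simp)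
      · intro h0; exact absurd h0 hqne

/-- Polynomial structure on diagonals. -/
theorem polynomial_structure_on_diagonals
    (a₁ a₂ b₁ b₂ : ℚ) (ha₁ : HalfInt a₁) (ha₂ : HalfInt a₂) (hb₁ : HalfInt b₁)
    (hb₂ : HalfInt b₂) (hint : ∃ n : ℤ, a₁ + b₁ = (n : ℚ))
    (ha : a₁ ≤ a₂) (hb : b₁ ≤ b₂)
    (U : ℚ × ℚ → ℝ) (hU : DHarmOn U (dRect a₁ a₂ b₁ b₂))
    (h0 : ∀ s : ℚ, (s, b₁) ∈ dRect a₁ a₂ b₁ b₂ → U (s, b₁) = 0)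
    (h0' : ∀ s : ℚ, (s, b₁ + 1/2) ∈ dRect a₁ a₂ b₁ b₂ → U (s, b₁ + 1/2) = 0) :
    ∀ k : ℚ, HalfInt k → b₁ + 1 ≤ k → k ≤ b₂ →
      ∃ p : Polynomial ℝ, ((p.natDegree : ℚ)) ≤ 2 * (k - b₁) - 2 ∧
        ∀ s : ℚ, (s, k) ∈ dRect a₁ a₂ b₁ b₂ →
          ∀ n : ℤ, s + k = (n : ℚ) → U (s, k) = (-1 : ℝ) ^ n * p.eval ((s : ℝ)) := by
  suffices H : ∀ m : ℕ, ∀ k : ℚ, k = b₁ + (m : ℚ)/2 → k ≤ b₂ →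
      ∃ p : Polynomial ℝ, ((p.natDegree : ℤ) ≤ (m : ℤ) - 2 ∨ p = 0) ∧
        ∀ s : ℚ, (s, k) ∈ dRect a₁ a₂ b₁ b₂ → ∀ n : ℤ, s + k = (n : ℚ) →
          U (s, k) = (-1 : ℝ) ^ n * p.eval ((s : ℝ)) by
    intro k hk hk1 hk2
    obtain ⟨K, hK⟩ := hk
    obtain ⟨B, hB⟩ := hb₁
    have hKB : B + 2 ≤ K := by
      have h2 : (B : ℚ) + 2 ≤ (K : ℚ) := by
        rw [hB, hK] at hk1; linarith
      exact_mod_cast h2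
    have hm : (((K - B).toNat : ℤ) : ℚ) = (K : ℚ) - B := by
      have h1 : ((K - B).toNat : ℤ) = K - B := Int.toNat_of_nonneg (by omega)
      rw [h1]; push_cast; ring
    obtain ⟨p, hdeg, hp⟩ := H (K - B).toNat k (by rw [hB, hK]; push_cast at hm ⊢; linarith) hk2
    refine ⟨p, ?_, hp⟩
    rcases hdeg with hdeg | rfl
    · have h3 : ((p.natDegree : ℚ)) ≤ (((K - B).toNat : ℤ) : ℚ) - 2 := by exact_mod_cast hdeg
      rw [hm] at h3
      rw [hK, hB]
      push_cast at h3 ⊢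
      linarith
    · simp only [Polynomial.natDegree_zero, Nat.cast_zero]
      rw [hK, hB]
      have : (B:ℚ) + 2 ≤ (K:ℚ) := by exact_mod_cast hKB
      linarith
  intro m
  induction m using Nat.strong_induction_on with
  | _ m IH =>
  match m, IH with
  | 0, _ =>
    intro k hkm hk2
    refine ⟨0, Or.inr rfl, ?_⟩
    intro s hs n hn
    have hk : k = b₁ := by rw [hkm]; norm_num
    rw [hk] at hs ⊢
    simp only [Polynomial.eval_zero, mul_zero]
    exact h0 s hs
  | 1, _ =>
    intro k hkm hk2
    refine ⟨0, Or.inr rfl, ?_⟩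
    intro s hs n hn
    have hk : k = b₁ + 1/2 := by rw [hkm]; norm_num
    rw [hk] at hs ⊢
    simp only [Polynomial.eval_zero, mul_zero]
    exact h0' s hs
  | (j+2), IH =>
    intro k hkm hk2
    have hkm' : k = b₁ + ((j:ℚ) + 2)/2 := by rw [hkm]; push_cast; ring
    have hjnn : (0:ℚ) ≤ (j:ℚ) := Nat.cast_nonneg j
    have hb1k : b₁ + 1 ≤ k := by rw [hkm']; linarith
    have hk'eq : k - 1/2 = b₁ + (((j+1 : ℕ)) : ℚ)/2 := by rw [hkm']; push_cast; ring
    have hk''eq : k - 1 = b₁ + (((j : ℕ)) : ℚ)/2 := by rw [hkm']; push_cast; ring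
    obtain ⟨p', hd', hp'⟩ := IH (j+1) (by omega) (k - 1/2) hk'eq (by linarith)
    obtain ⟨p'', hd'', hp''⟩ := IH j (by omega) (k - 1) hk''eq (by linarith)
    obtain ⟨B, hB⟩ := hb₁
    have hkH : HalfInt k := by
      refine ⟨B + j + 2, ?_⟩
      rw [hkm', hB]; push_cast; ring
    set q : Polynomial ℝ := Polynomial.C (-4) * (p'.comp (Polynomial.X + Polynomial.C (1/2)))
        - p'' + p''.comp (Polynomial.X + Polynomial.C 1) with hqdef
    have hqeval : ∀ x : ℝ, q.eval x = -4 * p'.eval (x + 1/2) - p''.eval x + p''.eval (x + 1) := by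
      intro x
      simp [hqdef, Polynomial.eval_comp]
    have hqd : ∃ P : Polynomial ℝ, (∀ x : ℝ, P.eval (x+1) - P.eval x = q.eval x) ∧
        P.natDegree ≤ j := by
      rcases Nat.eq_zero_or_pos j with rfl | hj
      · have hp'0 : p' = 0 := by
          rcases hd' with h | h
          · exfalso
            have := p'.natDegree
            omega
          · exact h
        have hp''0 : p'' = 0 := by
          rcases hd'' with h | h
          · exfalso; omega
          · exact h
        have hq0 : q = 0 := by rw [hqdef, hp'0, hp''0]; simp
        obtain ⟨P, h1, h2, h3⟩ := fwd_anti 0 q (by rw [hq0]; simp)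
        exact ⟨P, h1, by rw [h3 hq0]; simp⟩
      · have hd'n : p'.natDegree ≤ j - 1 := by
          rcases hd' with h | h
          · omega
          · rw [h]; simp
        have hd''n : p''.natDegree ≤ j - 1 := by
          rcases hd'' with h | h
          · omega
          · rw [h]; simp
        have hcompd : ∀ (p : Polynomial ℝ) (c : ℝ),
            (p.comp (Polynomial.X + Polynomial.C c)).natDegree = p.natDegree := by
          intro p c
          rw [Polynomial.natDegree_comp, Polynomial.natDegree_X_add_C, mul_one]
        have hqdn : q.natDegree ≤ j - 1 := by
          rw [hqdef]
          refine le_trans (Polynomial.natDegree_add_le _ _) (max_le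
            (le_trans (Polynomial.natDegree_sub_le _ _) (max_le ?_ hd''n)) ?_)
          · exact le_trans Polynomial.natDegree_mul_le (by simp [hcompd, hd'n])
          · rw [hcompd]; exact hd''n
        obtain ⟨P, h1, h2, _⟩ := fwd_anti (j-1) q hqdn
        exact ⟨P, h1, by omega⟩
    obtain ⟨P, hP, hPd⟩ := hqd
    have key : ∀ s : ℚ, ∀ n : ℤ, (s, k) ∈ dRect a₁ a₂ b₁ b₂ → (s + 1, k) ∈ dRect a₁ a₂ b₁ b₂ →
        s + k = (n : ℚ) →
        (-1:ℝ)^(n+1) * U (s+1, k) - P.eval ((s:ℝ) + 1) = (-1:ℝ)^n * U (s, k) - P.eval ((s:ℝ)) := by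
      intro s n hs hs1 hn
      obtain ⟨⟨hsH, -, -⟩, ha1s, hsa2, -, -⟩ := id hs
      obtain ⟨-, -, hs1a2, -, -⟩ := id hs1
      dsimp only at hsH ha1s hsa2 hs1a2
      have m1 : (s, k - 1) ∈ dRect a₁ a₂ b₁ b₂ :=
        mem_dRect hsH (hkH.sub halfInt_one) ⟨n - 1, by push_cast; linarith⟩ ha1s hsa2
          (by linarith) (by linarith)
      have m2 : (s + 1, k - 1) ∈ dRect a₁ a₂ b₁ b₂ :=
        mem_dRect (hsH.add halfInt_one) (hkH.sub halfInt_one) ⟨n, by push_cast; linarith⟩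
          (by linarith) hs1a2 (by linarith) (by linarith)
      have m5 : (s + 1/2, k - 1/2) ∈ dRect a₁ a₂ b₁ b₂ :=
        mem_dRect (hsH.add halfInt_half) (hkH.sub halfInt_half) ⟨n, by push_cast; linarith⟩
          (by linarith) (by linarith) (by linarith) (by linarith)
      have e1 : k - 1 + 1 = k := by ring
      have e2 : k - 1 + 1/2 = k - 1/2 := by ring
      have h4U := hU s (k-1) m1 m2 (by rw [e1]; exact hs) (by rw [e1]; exact hs1)
        (by rw [e2]; exact m5)
      rw [e1, e2] at h4U
      have v5 : U (s + 1/2, k - 1/2) = (-1:ℝ)^n * p'.eval ((s:ℝ) + 1/2) := by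
        have h := hp' (s + 1/2) m5 n (by push_cast; linarith)
        rwa [show (((s + 1/2 : ℚ)) : ℝ) = (s:ℝ) + 1/2 by push_cast; ring] at h
      have v1 : U (s, k - 1) = (-1:ℝ)^(n-1) * p''.eval ((s:ℝ)) :=
        hp'' s m1 (n-1) (by push_cast; linarith)
      have v2 : U (s + 1, k - 1) = (-1:ℝ)^n * p''.eval ((s:ℝ) + 1) := by
        have h := hp'' (s + 1) m2 n (by push_cast; linarith)
        rwa [show (((s + 1 : ℚ)) : ℝ) = (s:ℝ) + 1 by push_cast; ring] at h
      have hA1 : (-1:ℝ)^(n+1) = -(-1:ℝ)^n := by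
        rw [zpow_add_one₀ (by norm_num : (-1:ℝ) ≠ 0)]; ring
      have hA2 : (-1:ℝ)^(n-1) = -(-1:ℝ)^n := by
        rw [zpow_sub_one₀ (by norm_num : (-1:ℝ) ≠ 0)]; ring
      have hAA : (-1:ℝ)^n * (-1:ℝ)^n = 1 := by
        rw [← mul_zpow]; norm_num
      have hPq := hP ((s:ℝ))
      rw [hqeval] at hPq
      rw [v5, v1, v2, hA2] at h4U
      rw [hA1]
      linear_combination ((-1:ℝ)^n) * h4U - hPq
        - (4 * p'.eval ((s:ℝ)+1/2) + p''.eval ((s:ℝ)) - p''.eval ((s:ℝ)+1)) * hAA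
    have steps : ∀ ℓ : ℕ, ∀ s t : ℚ, ∀ n m' : ℤ, (s,k) ∈ dRect a₁ a₂ b₁ b₂ →
        (t,k) ∈ dRect a₁ a₂ b₁ b₂ → s + k = (n:ℚ) → t + k = (m':ℚ) →
        m' = n + (ℓ:ℤ) → t = s + (ℓ:ℚ) →
        (-1:ℝ)^m' * U (t,k) - P.eval ((t:ℝ)) = (-1:ℝ)^n * U (s,k) - P.eval ((s:ℝ)) := by
      intro ℓ
      induction ℓ with
      | zero =>
        intro s t n m' hs ht hn hm hm' ht'
        have h1 : t = s := by rw [ht']; push_cast; ring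
        subst h1
        have h2 : m' = n := by omega
        subst h2
        rfl
      | succ ℓ IHl =>
        intro s t n m' hs ht hn hm hm' ht'
        obtain ⟨⟨hsH, -, -⟩, ha1s, hsa2, -, -⟩ := id hs
        obtain ⟨-, -, hta2, -, -⟩ := id ht
        dsimp only at hsH ha1s hsa2 hta2
        have htt' : t = (s + (ℓ:ℚ)) + 1 := by rw [ht']; push_cast; ring
        have hmt' : (s + (ℓ:ℚ), k) ∈ dRect a₁ a₂ b₁ b₂ :=
          mem_dRect (hsH.add (halfInt_nat ℓ)) hkH ⟨n + ℓ, by push_cast; linarith⟩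
            (by have := Nat.cast_nonneg (α := ℚ) ℓ; linarith)
            (by have : (s + (ℓ:ℚ)) + 1 ≤ a₂ := htt' ▸ hta2; linarith)
            (by linarith) hk2
        have hmt1 : ((s + (ℓ:ℚ)) + 1, k) ∈ dRect a₁ a₂ b₁ b₂ := htt' ▸ ht
        have hkey := key (s + (ℓ:ℚ)) (n + ℓ) hmt' hmt1 (by push_cast; linarith)
        have hIH := IHl s (s + (ℓ:ℚ)) n (n + ℓ) hs hmt' hn (by push_cast; linarith) rfl rfl
        rw [htt', show m' = (n + (ℓ:ℤ)) + 1 from by omega,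
          show ((((s + (ℓ:ℚ)) + 1 : ℚ)) : ℝ) = ((s + (ℓ:ℚ) : ℚ) : ℝ) + 1 from by push_cast; ring]
        rw [hkey]
        exact hIH
    by_cases hne : ∃ s₀ : ℚ, (s₀, k) ∈ dRect a₁ a₂ b₁ b₂
    · obtain ⟨s₀, hs₀⟩ := hne
      obtain ⟨⟨-, -, n₀, hn₀⟩, -⟩ := id hs₀
      refine ⟨P + Polynomial.C ((-1:ℝ)^n₀ * U (s₀,k) - P.eval ((s₀:ℝ))), Or.inl ?_, ?_⟩
      · have h1 := Polynomial.natDegree_add_le P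
          (Polynomial.C ((-1:ℝ)^n₀ * U (s₀,k) - P.eval ((s₀:ℝ))))
        have h2 : (Polynomial.C ((-1:ℝ)^n₀ * U (s₀,k) - P.eval ((s₀:ℝ)))).natDegree = 0 :=
          Polynomial.natDegree_C _
        push_cast
        omega
      · intro s hs n hn
        have hd : s - s₀ = (((n - n₀ : ℤ)) : ℚ) := by push_cast; linarith
        push_cast at hd
        have E : (-1:ℝ)^n * U (s,k) - P.eval ((s:ℝ))
            = (-1:ℝ)^n₀ * U (s₀,k) - P.eval ((s₀:ℝ)) := by
          rcases le_or_gt n₀ n with hle | hlt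
          · refine steps (n - n₀).toNat s₀ s n₀ n hs₀ hs hn₀ hn (by omega) ?_
            have h1 : (((n - n₀).toNat : ℤ)) = n - n₀ := Int.toNat_of_nonneg (by omega)
            have h2 : (((n - n₀).toNat : ℚ)) = (n:ℚ) - (n₀:ℚ) := by exact_mod_cast h1
            linarith
          · refine (steps (n₀ - n).toNat s s₀ n n₀ hs hs₀ hn hn₀ (by omega) ?_).symm
            have h1 : (((n₀ - n).toNat : ℤ)) = n₀ - n := Int.toNat_of_nonneg (by omega)
            have h2 : (((n₀ - n).toNat : ℚ)) = (n₀:ℚ) - (n:ℚ) := by exact_mod_cast h1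
            linarith
        have hAA : (-1:ℝ)^n * (-1:ℝ)^n = 1 := by rw [← mul_zpow]; norm_num
        rw [Polynomial.eval_add, Polynomial.eval_C]
        linear_combination ((-1:ℝ)^n) * E - U (s,k) * hAA
    · refine ⟨0, Or.inr rfl, ?_⟩
      intro s hs
      exact absurd ⟨s, hs⟩ hne
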